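/- Let F, F' ∈ ℝ² with F ≠ F' and A_K with 2A_K > dist(F,F'), and let P lie on the boundary ellipse B = {z : dist(z,F) + dist(z,F') = 2A_K} (so P ≠ F, P ≠ F'). Let t be the tangent line of B at P, i.e. the line through P perpendicular to N = (P−F)/‖P−F‖ + (P−F')/‖P−F'‖. Let F_i ∈ ℝ² with F_i ≠ P, and let F_{i+1} be the reflection of F_i across the line through P and F'. Then: (i) dist(F', F_{i+1}) = dist(F', F_i); (ii) dist(P, F_{i+1}) = dist(P, F_i); and (iii) setting n₁ = (P−F)/‖P−F‖ + (P−F_i)/‖P−F_i‖, n₂ = (P−F)/‖P−F‖ + (P−F_{i+1})/‖P−F_{i+1}‖, and n₁' = (reflection of the point P + n₁ across t) − P, the vectors n₁' and n₂ are linearly dependent. (So reflecting the second focus across the line PF' implements elastic reflection of the Kepler flight ellipse at the conic boundary B, and all consecutive second foci lie on the circle centered at the second focus F' of B with radius dist(F',F_i): the foci circle of the Kepler billiard.) -/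

import Mathlib

open EuclideanGeometry RealInnerProductSpace

instance (p : EuclideanSpace ℝ (Fin 2)) (K : Submodule ℝ (EuclideanSpace ℝ (Fin 2))) :
    Nonempty (AffineSubspace.mk' p K) :=
  (AffineSubspace.mk'_nonempty p K).to_subtype

lemma reflection_mk'_eq (p : EuclideanSpace ℝ (Fin 2))
    (K : Submodule ℝ (EuclideanSpace ℝ (Fin 2))) (x : EuclideanSpace ℝ (Fin 2)) :
    EuclideanGeometry.reflection (AffineSubspace.mk' p K) x
      = p + (K.reflection) (x - p) := by
  set a : EuclideanSpace ℝ (Fin 2) := (K.orthogonalProjectionOnto (x - p) : EuclideanSpace ℝ (Fin 2))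
    with ha
  have hp' : a + p ∈ AffineSubspace.mk' p K := by
    rw [AffineSubspace.mem_mk', vsub_eq_sub, add_sub_cancel_right]
    exact (K.orthogonalProjectionOnto (x - p)).2
  have hb : x - (a + p) ∈ (AffineSubspace.mk' p K).direction ᗮ := by
    rw [AffineSubspace.direction_mk']
    have h2 := Submodule.sub_starProjection_mem_orthogonal (K := K) (x - p)
    rw [Submodule.starProjection_apply, ← ha] at h2
    have h3 : x - (a + p) = (x - p) - a := by abel
    rw [h3]; exact h2
  have hproj := EuclideanGeometry.orthogonalProjection_vadd_eq_self (p := a + p)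
    (v := x - (a + p)) hp' hb
  have hx : (x - (a + p)) +ᵥ (a + p) = x := by
    simp only [vadd_eq_add]; abel
  rw [hx] at hproj
  rw [EuclideanGeometry.reflection_apply', hproj, Submodule.reflection_apply, Submodule.starProjection_apply, ← ha]
  simp only [vsub_eq_sub, vadd_eq_add, two_smul]
  abel

lemma opposite_dir_norm_add (x y : EuclideanSpace ℝ (Fin 2)) (hx : x ≠ 0) (hy : y ≠ 0)
    (h : ⟪‖x‖⁻¹ • x, ‖y‖⁻¹ • y⟫ = -1) : ‖x - y‖ = ‖x‖ + ‖y‖ := by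
  have hnx : ‖x‖ ≠ 0 := norm_ne_zero_iff.mpr hx
  have hny : ‖y‖ ≠ 0 := norm_ne_zero_iff.mpr hy
  rw [real_inner_smul_left, real_inner_smul_right] at h
  have hipf : ⟪x, y⟫ = -(‖x‖ * ‖y‖) := by
    generalize hXg : ⟪x, y⟫ = X at h ⊢
    field_simp at h
    linarith
  have hsq : ‖x - y‖ ^ 2 = (‖x‖ + ‖y‖) ^ 2 := by
    rw [norm_sub_sq_real, hipf]; ring
  have h1 : (0:ℝ) ≤ ‖x - y‖ := norm_nonneg _
  have h2 : (0:ℝ) ≤ ‖x‖ + ‖y‖ := by positivity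
  nlinarith

/-- The line through `P` perpendicular to the vector `n`. -/
noncomputable def perpLineAt (P n : EuclideanSpace ℝ (Fin 2)) :
    AffineSubspace ℝ (EuclideanSpace ℝ (Fin 2)) :=
  AffineSubspace.mk' P (ℝ ∙ n)ᗮ

instance (P n : EuclideanSpace ℝ (Fin 2)) : Nonempty (perpLineAt P n) :=
  (AffineSubspace.mk'_nonempty P (ℝ ∙ n)ᗮ).to_subtype

set_option maxHeartbeats 1000000

/-- **The foci circle of the Kepler billiard.** Let `P` lie on the boundary ellipse `B` with
foci `F ≠ F'` and semi-major axis `A_K` (so `P ≠ F`, `P ≠ F'`), let `t` be the tangent line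
of `B` at `P` (through `P`, perpendicular to `N`), let `F_i ≠ P` and let `F_next` be the
reflection of `F_i` across the line through `P` and `F'`.  Then
(i) `dist F' F_next = dist F' F_i`, (ii) `dist P F_next = dist P F_i`, and
(iii) the reflection across `t` carries the tangent direction at `P` of the flight ellipse
with foci `F, F_i` to that of the flight ellipse with foci `F, F_next` (the reflected
normal `n₁'` is linearly dependent with `n₂`).  Hence reflecting the second focus across
the line `P F'` implements elastic reflection at `B`, and all consecutive second foci lie
on the circle centered at `F'` of radius `dist F' F_i`. -/
theorem kepler_foci_circle
    (F F' : EuclideanSpace ℝ (Fin 2)) (hFF' : F ≠ F') (A_K : ℝ)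
    (hA : 2 * A_K > dist F F')
    (P : EuclideanSpace ℝ (Fin 2)) (hP : dist P F + dist P F' = 2 * A_K)
    (N : EuclideanSpace ℝ (Fin 2))
    (hN : N = ‖P - F‖⁻¹ • (P - F) + ‖P - F'‖⁻¹ • (P - F'))
    (F_i : EuclideanSpace ℝ (Fin 2)) (hFi : F_i ≠ P)
    (F_next : EuclideanSpace ℝ (Fin 2))
    (hFnext : F_next = EuclideanGeometry.reflection
      (affineSpan ℝ ({P, F'} : Set (EuclideanSpace ℝ (Fin 2)))) F_i)
    (n₁ n₂ n₁' : EuclideanSpace ℝ (Fin 2))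
    (hn₁ : n₁ = ‖P - F‖⁻¹ • (P - F) + ‖P - F_i‖⁻¹ • (P - F_i))
    (hn₂ : n₂ = ‖P - F‖⁻¹ • (P - F) + ‖P - F_next‖⁻¹ • (P - F_next))
    (hn₁' : n₁' = EuclideanGeometry.reflection (perpLineAt P N) (P + n₁) - P) :
    P ≠ F ∧ P ≠ F' ∧
    dist F' F_next = dist F' F_i ∧
    dist P F_next = dist P F_i ∧
    ¬ LinearIndependent ℝ ![n₁', n₂] := by
  -- P is not a focus
  have hPF : P ≠ F := by
    rintro rfl
    rw [dist_self, zero_add] at hP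
    linarith
  have hPF' : P ≠ F' := by
    rintro rfl
    rw [dist_self, add_zero] at hP
    rw [dist_comm] at hA
    linarith
  have hPFs : P - F ≠ 0 := sub_ne_zero.mpr hPF
  have hPF's : P - F' ≠ 0 := sub_ne_zero.mpr hPF'
  have hPFis : P - F_i ≠ 0 := sub_ne_zero.mpr (Ne.symm hFi)
  -- the span equality
  have hmemP : P ∈ affineSpan ℝ ({P, F'} : Set (EuclideanSpace ℝ (Fin 2))) :=
    mem_affineSpan ℝ (by simp)
  have hmemF' : F' ∈ affineSpan ℝ ({P, F'} : Set (EuclideanSpace ℝ (Fin 2))) :=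
    mem_affineSpan ℝ (by simp)
  refine ⟨hPF, hPF', ?_, ?_, ?_⟩
  · rw [hFnext, EuclideanGeometry.dist_reflection_eq_of_mem _ hmemF']
  · rw [hFnext, EuclideanGeometry.dist_reflection_eq_of_mem _ hmemP]
  -- main part
  set u : EuclideanSpace ℝ (Fin 2) := ‖P - F‖⁻¹ • (P - F) with hu
  set v : EuclideanSpace ℝ (Fin 2) := ‖P - F'‖⁻¹ • (P - F') with hv
  set w : EuclideanSpace ℝ (Fin 2) := ‖P - F_i‖⁻¹ • (P - F_i) with hw
  have hun : ‖u‖ = 1 := norm_smul_inv_norm hPFs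
  have hvn : ‖v‖ = 1 := norm_smul_inv_norm hPF's
  have hwn : ‖w‖ = 1 := norm_smul_inv_norm hPFis
  have huu : ⟪u, u⟫ = 1 := by rw [real_inner_self_eq_norm_sq, hun]; norm_num
  have hvv : ⟪v, v⟫ = 1 := by rw [real_inner_self_eq_norm_sq, hvn]; norm_num
  have hww : ⟪w, w⟫ = 1 := by rw [real_inner_self_eq_norm_sq, hwn]; norm_num
  set c : ℝ := ⟪u, v⟫ with hc
  set d : ℝ := ⟪u, w⟫ with hd
  set e : ℝ := ⟪v, w⟫ with he
  have hcu : ⟪v, u⟫ = c := by rw [hc]; exact real_inner_comm u v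
  have hdu : ⟪w, u⟫ = d := by rw [hd]; exact real_inner_comm u w
  have heu : ⟪w, v⟫ = e := by rw [he]; exact real_inner_comm v w
  -- 1 + c ≠ 0
  have hc1 : (1 : ℝ) + c ≠ 0 := by
    intro h
    have hcm : ⟪u, v⟫ = -1 := by rw [← hc]; linarith
    have hnorm := opposite_dir_norm_add (P - F) (P - F') hPFs hPF's hcm
    have hsub : (P - F) - (P - F') = F' - F := by abel
    rw [hsub] at hnorm
    have hdFF : dist F F' = ‖F' - F‖ := by rw [dist_eq_norm, norm_sub_rev]
    rw [dist_eq_norm, dist_eq_norm] at hP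
    rw [hdFF, hnorm, hP] at hA
    exact lt_irrefl _ hA
  clear_value c d e
  clear_value u v w
  -- reflection across line P F'
  have hKv : (ℝ ∙ (P - F')) = (ℝ ∙ v) := by
    rw [hv]
    exact (Submodule.span_singleton_smul_eq
      (IsUnit.mk0 _ (inv_ne_zero (norm_ne_zero_iff.mpr hPF's))) _).symm
  have hspan : affineSpan ℝ ({P, F'} : Set (EuclideanSpace ℝ (Fin 2)))
      = AffineSubspace.mk' P (ℝ ∙ v) := by
    rw [← AffineSubspace.mk'_eq hmemP, direction_affineSpan, vectorSpan_pair,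
      vsub_eq_sub, hKv]
  have hFnext' : F_next = P + ((ℝ ∙ v).reflection) (F_i - P) := by
    rw [hFnext, EuclideanGeometry.eq_reflection_of_eq_subspace hspan, reflection_mk'_eq]
  have hPFnext : P - F_next = ((ℝ ∙ v).reflection) (P - F_i) := by
    rw [hFnext', show P - (P + ((ℝ ∙ v).reflection) (F_i - P))
      = -(((ℝ ∙ v).reflection) (F_i - P)) from by abel, ← map_neg, neg_sub]
  have hnormF : ‖P - F_next‖ = ‖P - F_i‖ := by
    rw [hPFnext]; exact ((ℝ ∙ v).reflection).norm_map _
  have hw' : ‖P - F_next‖⁻¹ • (P - F_next) = (2 * e) • v - w := by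
    rw [hnormF, hPFnext, ← map_smul, ← hw, Submodule.reflection_singleton_apply, hvn]
    simp only [RCLike.ofReal_one, one_pow, div_one]
    rw [← he, two_smul, two_mul, add_smul]
  have hn2 : n₂ = u + ((2 * e) • v - w) := by rw [hn₂, hw']
  -- the reflected normal
  have hNuv : N = u + v := hN
  have hn1uw : n₁ = u + w := hn₁
  have hrefl1 : n₁' = ((ℝ ∙ N)ᗮ.reflection) n₁ := by
    rw [hn₁', EuclideanGeometry.eq_reflection_of_eq_subspace
      (show perpLineAt P N = AffineSubspace.mk' P (ℝ ∙ N)ᗮ from rfl) (P + n₁),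
      reflection_mk'_eq, add_sub_cancel_left, add_sub_cancel_left]
  have hNsq : (‖N‖ : ℝ) ^ 2 = 2 + 2 * c := by
    rw [← real_inner_self_eq_norm_sq, hNuv]
    simp only [inner_add_left, inner_add_right, huu, hvv, hc, hcu]
    ring
  have hNn1 : ⟪N, n₁⟫ = 1 + c + d + e := by
    rw [hNuv, hn1uw]
    simp only [inner_add_left, inner_add_right, huu, hd, hcu, he]
    ring
  have hM : (1 + c) • n₁' = (1 + c) • (u + w) - (1 + c + d + e) • (u + v) := by
    have hNsq' : (RCLike.ofReal ‖N‖ : ℝ) ^ 2 = 2 + 2 * c := by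
      rw [show (RCLike.ofReal ‖N‖ : ℝ) = ‖N‖ from rfl]; exact hNsq
    have h2c : (2 : ℝ) + 2 * c ≠ 0 := by intro h; apply hc1; linarith
    rw [hrefl1, Submodule.reflection_orthogonal_apply, Submodule.reflection_singleton_apply, hNn1, hNsq',
      hn1uw, hNuv]
    match_scalars <;> field_simp <;> ring
  -- the Gram relation in dimension 2
  have hdep : ¬ LinearIndependent ℝ ![u, v, w] := by
    intro h
    have hle := h.fintype_card_le_finrank
    rw [finrank_euclideanSpace_fin] at hle
    simp at hle
  obtain ⟨g, hg0, i, hgi⟩ := Fintype.not_linearIndependent_iff.mp hdep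
  have hsum : g 0 • u + g 1 • v + g 2 • w = 0 := by
    have := hg0
    simpa [Fin.sum_univ_three, add_assoc] using this
  have h1 : g 0 + g 1 * c + g 2 * d = 0 := by
    have h := congrArg (fun z => ⟪u, z⟫) hsum
    simp only [inner_add_right, real_inner_smul_right, inner_zero_right, huu, ← hc, ← hd] at h
    linarith
  have h2 : g 0 * c + g 1 + g 2 * e = 0 := by
    have h := congrArg (fun z => ⟪v, z⟫) hsum
    simp only [inner_add_right, real_inner_smul_right, inner_zero_right, hvv, hcu, ← he] at h
    linarith
  have h3 : g 0 * d + g 1 * e + g 2 = 0 := by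
    have h := congrArg (fun z => ⟪w, z⟫) hsum
    simp only [inner_add_right, real_inner_smul_right, inner_zero_right, hww, hdu, heu] at h
    linarith
  have hg : 1 + 2 * c * d * e - c ^ 2 - d ^ 2 - e ^ 2 = 0 := by
    fin_cases i
    · have := mul_eq_zero.mp (show (1 + 2*c*d*e - c^2 - d^2 - e^2) * g 0 = 0 by
        linear_combination (1 - e^2) * h1 + (d*e - c) * h2 + (c*e - d) * h3)
      tauto
    · have := mul_eq_zero.mp (show (1 + 2*c*d*e - c^2 - d^2 - e^2) * g 1 = 0 by
        linear_combination (d*e - c) * h1 + (1 - d^2) * h2 + (c*d - e) * h3)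
      tauto
    · have := mul_eq_zero.mp (show (1 + 2*c*d*e - c^2 - d^2 - e^2) * g 2 = 0 by
        linear_combination (c*e - d) * h1 + (c*d - e) * h2 + (1 - c^2) * h3)
      tauto
  -- the three scalar quantities
  have e1 : (1 + c) * ⟪n₁', n₂⟫
      = (1 + c) * (2*e*c + 2*e^2) - (1 + c + d + e) * (1 + c + e + 2*e*c - d) := by
    have h := congrArg (fun z => ⟪z, n₂⟫) hM
    simp only [real_inner_smul_left, inner_sub_left, inner_add_left] at h
    rw [hn2] at h
    simp only [inner_add_right, inner_sub_right, real_inner_smul_right,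
      huu, hvv, hww, ← hc, ← hd, ← he, hcu, hdu, heu] at h
    have hsplit : ⟪n₁', n₂⟫ = ⟪n₁', u⟫ + (2 * e * ⟪n₁', v⟫ - ⟪n₁', w⟫) := by
      rw [hn2]
      simp only [inner_add_right, inner_sub_right, real_inner_smul_right]
    linear_combination h + (1 + c) * hsplit
  have e2 : ((1 + c))^2 * ⟪n₁', n₁'⟫ = (1 + c)^2 * (2 + 2*d) := by
    have h := congrArg (fun z => ⟪z, z⟫) hM
    simp only [real_inner_smul_left, real_inner_smul_right, inner_sub_left, inner_add_left,
      inner_sub_right, inner_add_right, huu, hvv, hww, ← hc, ← hd, ← he, hcu, hdu, heu] at h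
    linear_combination h
  have e3 : ⟪n₂, n₂⟫ = 2 + 4*c*e - 2*d := by
    rw [hn2]
    simp only [inner_add_left, inner_add_right, inner_sub_left, inner_sub_right,
      real_inner_smul_left, real_inner_smul_right, huu, hvv, hww, ← hc, ← hd, ← he, hcu, hdu, heu]
    ring
  -- the key Cauchy–Schwarz equality
  have key : ⟪n₁', n₂⟫ ^ 2 = (‖n₁'‖ * ‖n₂‖) ^ 2 := by
    have hbig : ((1 + c) * ⟪n₁', n₂⟫) ^ 2
        = ((1 + c)^2 * ⟪n₁', n₁'⟫) * ⟪n₂, n₂⟫ := by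
      rw [e1, e2, e3]
      linear_combination (-(c^2) + 2*c*d*e + 4*c*e - 4*c - d^2 - e^2 + 4*e - 3) * hg
    have h1c2 : ((1 + c) : ℝ)^2 ≠ 0 := pow_ne_zero _ hc1
    have hrs : (‖n₁'‖ * ‖n₂‖)^2 = ⟪n₁', n₁'⟫ * ⟪n₂, n₂⟫ := by
      rw [real_inner_self_eq_norm_sq, real_inner_self_eq_norm_sq]; ring
    rw [hrs]
    apply mul_left_cancel₀ h1c2
    linear_combination hbig
  -- conclude linear dependence
  have habs : ⟪n₁', n₂⟫ = ‖n₁'‖ * ‖n₂‖ ∨ ⟪n₁', n₂⟫ = -(‖n₁'‖ * ‖n₂‖) :=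
    sq_eq_sq_iff_eq_or_eq_neg.mp key
  have hdep2 : ∃ t : ℝ, ‖n₂‖ • n₁' = t • n₂ := by
    rcases habs with h | h
    · exact ⟨‖n₁'‖, inner_eq_norm_mul_iff_real.mp h⟩
    · refine ⟨-‖n₁'‖, ?_⟩
      have h' : ⟪n₁', -n₂⟫ = ‖n₁'‖ * ‖-n₂‖ := by
        rw [inner_neg_right, norm_neg, h]; ring
      have := inner_eq_norm_mul_iff_real.mp h'
      rw [norm_neg] at this
      rw [this, smul_neg, neg_smul]
  intro hLI
  have hn2ne : n₂ ≠ 0 := by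
    have := hLI.ne_zero 1
    simpa using this
  obtain ⟨t, ht⟩ := hdep2
  have := (LinearIndependent.pair_iff.mp hLI ‖n₂‖ (-t) (by rw [neg_smul, ht]; abel)).1
  exact (norm_ne_zero_iff.mpr hn2ne) this
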